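/- Let P be a bounded meet semilattice with 0 ≠ 1 and e : P → BP the map e(a) = □◇↓(a,0) for a ≠ 0, e(0) = ∅, into the regular open algebra BP of X_P. If S ⊆ P has an exact join (i.e., ⋁S exists and for every a ∈ P, ⋁_{s∈S}(a ∧ s) exists and equals a ∧ ⋁S), then e(⋁S) equals the join in BP of {e(s) | s ∈ S}, namely □◇(⋃_{s∈S} e(s)). -/

import Mathlib

/-- The poset `X_P = {(a,b) ∈ P × P | a ≰ b}`. -/
def XP (P : Type*) [Preorder P] : Type _ := {p : P × P // ¬ p.1 ≤ p.2}

/-- Build an element of `X_P` from a pair `(a,b)` with `a ≰ b`. -/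
def XP.mk {P : Type*} [Preorder P] (p : P × P) (h : ¬ p.1 ≤ p.2) : XP P := ⟨p, h⟩

/-- The underlying pair of an element of `X_P`. -/
def XP.val {P : Type*} [Preorder P] (x : XP P) : P × P := Subtype.val x

theorem XP.prop {P : Type*} [Preorder P] (x : XP P) : ¬ x.val.1 ≤ x.val.2 := Subtype.prop x

/-- The order `(a,b) ⊑ (c,d) ↔ a ≤ c ∧ d ≤ b` on `X_P`. -/
instance XP.instPartialOrder (P : Type*) [PartialOrder P] : PartialOrder (XP P) where
  le x y := x.val.1 ≤ y.val.1 ∧ y.val.2 ≤ x.val.2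
  le_refl x := ⟨le_refl _, le_refl _⟩
  le_trans x y z h h' := ⟨h.1.trans h'.1, h'.2.trans h.2⟩
  le_antisymm x y h h' :=
    Subtype.ext (Prod.ext (le_antisymm h.1 h'.1) (le_antisymm h'.2 h.2))

/-- Interior in the downset topology: `□U = {x | ↓x ⊆ U}`. -/
def box {α : Type*} [Preorder α] (U : Set α) : Set α := {x | ∀ y, y ≤ x → y ∈ U}

/-- Closure in the downset topology: `◇U = {x | ↓x ∩ U ≠ ∅}`. -/
def dia {α : Type*} [Preorder α] (U : Set α) : Set α := {x | ∃ y, y ≤ x ∧ y ∈ U}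

/-- The `⊑`-downset of `x` in `X_P`. -/
def dn {P : Type*} [PartialOrder P] (x : XP P) : Set (XP P) := {y | y ≤ x}


section Aux
variable {α : Type*} [Preorder α]

lemma box_mono' {U V : Set α} (h : U ⊆ V) : box U ⊆ box V := fun _ hx y hy => h (hx y hy)
lemma dia_mono' {U V : Set α} (h : U ⊆ V) : dia U ⊆ dia V :=
  fun _ ⟨y, hy, hU⟩ => ⟨y, hy, h hU⟩
lemma box_subset' (U : Set α) : box U ⊆ U := fun x hx => hx x (le_refl x)
lemma dia_dia' (U : Set α) : dia (dia U) ⊆ dia U :=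
  fun _ ⟨y, hy, z, hz, hU⟩ => ⟨z, hz.trans hy, hU⟩
lemma boxdia_le' {A B : Set α} (h : A ⊆ dia B) : box (dia A) ⊆ box (dia B) :=
  box_mono' (fun _ hx => dia_dia' B (dia_mono' h hx))

end Aux

/-- For a bounded meet semilattice `P` with `0 ≠ 1` and the map
`e : P → BP` with `e 0 = ∅`, `e a = □◇↓(a,0)` for `a ≠ 0`: if `S ⊆ P` has an
exact join `m = ⋁S` (i.e. for every `a`, `a ⊓ m` is the join of `{a ⊓ s | s ∈ S}`),
then `e m` is the join in `BP` of `{e s | s ∈ S}`, namely `□◇(⋃_{s ∈ S} e s)`. -/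
theorem funayama_e_preserves_exact_joins {P : Type*} [SemilatticeInf P] [BoundedOrder P]
    (hne : (⊥ : P) ≠ ⊤)
    (e : P → Set (XP P))
    (he0 : e ⊥ = ∅)
    (he : ∀ (a : P) (h : ¬ a ≤ (⊥ : P)), e a = box (dia (dn (XP.mk (a, ⊥) h))))
    (S : Set P) (m : P)
    (hm : IsLUB S m)
    (hexact : ∀ a : P, IsLUB ((fun s => a ⊓ s) '' S) (a ⊓ m)) :
    e m = box (dia (⋃ s ∈ S, e s)) := by
  by_cases hmb : m ≤ ⊥
  · have hm0 : m = ⊥ := le_bot_iff.mp hmb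
    subst hm0
    rw [he0]
    have hB : (⋃ s ∈ S, e s) = (∅ : Set (XP P)) := by
      apply Set.eq_empty_iff_forall_notMem.mpr
      intro x hx
      rw [Set.mem_iUnion₂] at hx
      obtain ⟨s, hs, hxs⟩ := hx
      rw [le_bot_iff.mp (hm.1 hs), he0] at hxs
      exact hxs
    rw [hB]
    symm
    apply Set.eq_empty_iff_forall_notMem.mpr
    intro x hx
    obtain ⟨y, _, hy⟩ := box_subset' _ hx
    exact hy
  · rw [he m hmb]
    apply Set.Subset.antisymm
    · apply boxdia_le'
      intro x hx
      have hc : x.val.1 ≤ m := hx.1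
      have hcd : ¬ x.val.1 ≤ x.val.2 := x.prop
      have hlub := hexact x.val.1
      rw [inf_eq_left.mpr hc] at hlub
      have hex : ∃ s ∈ S, ¬ x.val.1 ⊓ s ≤ x.val.2 := by
        by_contra hcon
        push_neg at hcon
        exact hcd (hlub.2 (fun t ht => by
          obtain ⟨s, hs, rfl⟩ := ht; exact hcon s hs))
      obtain ⟨s, hsS, hcs⟩ := hex
      have hs0 : ¬ s ≤ ⊥ := fun h =>
        hcs (le_trans inf_le_right (h.trans bot_le))
      refine ⟨⟨(x.val.1 ⊓ s, x.val.2), hcs⟩, ⟨inf_le_left, le_refl _⟩, ?_⟩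
      apply Set.mem_iUnion₂.mpr
      refine ⟨s, hsS, ?_⟩
      rw [he s hs0]
      intro z hz
      exact ⟨z, le_refl z, hz.1.trans inf_le_right, bot_le⟩
    · apply boxdia_le'
      intro x hx
      rw [Set.mem_iUnion₂] at hx
      obtain ⟨s, hsS, hxs⟩ := hx
      by_cases hs0 : s ≤ ⊥
      · rw [le_bot_iff.mp hs0, he0] at hxs
        exact absurd hxs (Set.notMem_empty x)
      · rw [he s hs0] at hxs
        obtain ⟨y, hyx, hy⟩ := box_subset' _ hxs
        exact ⟨y, hyx, hy.1.trans (hm.1 hsS), bot_le⟩
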